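/- Let α < ω₁ be a countable ordinal and let the scalar field be ℝ. Then there exists a linear isometric embedding T : C([1, ω^α]) → C([1, ω^{α⊕α}]) such that for every pair f, g ∈ C([1, ω^α]) with ‖f‖ = ‖g‖ = 1 there exists a point r ∈ [1, ω^{α⊕α}] with min(|Tf(r)|, |Tg(r)|) ≥ 1/3; consequently, T(C([1, ω^α])) does 3-SPR in C([1, ω^{α⊕α}]). -/

import Mathlib

open scoped ZeroAtInfty

namespace Ordinal

/-- Natural (Hessenberg) addition of ordinals, as in Mathlib's former
`Mathlib/SetTheory/Ordinal/NaturalOps.lean` (since removed from Mathlib). -/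
noncomputable def nadd : Ordinal.{u} → Ordinal.{u} → Ordinal.{u}
  | a, b =>
    max (⨆ x : Set.Iio a, Order.succ (nadd x.1 b)) (⨆ x : Set.Iio b, Order.succ (nadd a x.1))
termination_by a b => (a, b)
decreasing_by all_goals cases x; decreasing_tactic

end Ordinal

infixl:65 " ♯ " => Ordinal.nadd

noncomputable section

/-- The pointwise modulus of a continuous function, as a real-valued continuous function. -/
def cmAbs {K : Type*} [TopologicalSpace K] {𝕜 : Type*} [RCLike 𝕜]
    (f : C(K, 𝕜)) : C(K, ℝ) :=
  ⟨fun x => ‖f x‖, (map_continuous f).norm⟩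

/-- `inf_{‖λ‖ = 1} ‖f - λ • g‖`. -/
def sprInf {K : Type*} [TopologicalSpace K] [CompactSpace K] {𝕜 : Type*} [RCLike 𝕜]
    (f g : C(K, 𝕜)) : ℝ :=
  ⨅ l : {c : 𝕜 // ‖c‖ = 1}, ‖f - (l : 𝕜) • g‖

/-- A subspace `E ⊆ C(K, 𝕜)` does `C`-stable phase retrieval. -/
def DoesCSPR {K : Type*} [TopologicalSpace K] [CompactSpace K] {𝕜 : Type*} [RCLike 𝕜]
    (E : Submodule 𝕜 C(K, 𝕜)) (C : ℝ) : Prop :=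
  ∀ f ∈ E, ∀ g ∈ E, sprInf f g ≤ C * ‖cmAbs f - cmAbs g‖

/-- A subspace `E ⊆ C(K, 𝕜)` does stable phase retrieval. -/
def DoesSPR {K : Type*} [TopologicalSpace K] [CompactSpace K] {𝕜 : Type*} [RCLike 𝕜]
    (E : Submodule 𝕜 C(K, 𝕜)) : Prop :=
  ∃ C : ℝ, 1 ≤ C ∧ DoesCSPR E C

/-- Ordinal intervals `[a, b]` (with the order topology of the ordinals) are compact spaces. -/
instance ordIccCompact (a b : Ordinal.{0}) : CompactSpace (Set.Icc a b) :=
  isCompact_iff_compactSpace.mp isCompact_Icc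

/-- The Cantor–Bendixson derivatives of a topological space: `cbDeriv K 0 = K`,
`cbDeriv K (o+1)` is the derived set (set of accumulation points) of `cbDeriv K o`, and at
limit ordinals one takes intersections. -/
def cbDeriv (K : Type*) [TopologicalSpace K] (o : Ordinal.{0}) : Set K :=
  Ordinal.limitRecOn o Set.univ (fun _ ih => derivedSet ih)
    (fun o _ ih => ⋂ b : Set.Iio o, ih b b.2)

section AuxiliaryConstructions

open Ordinal Set Filter Topology

namespace OrdSPR

lemma nadd_eq (a b : Ordinal.{0}) : a ♯ b =
    max (⨆ x : Set.Iio a, Order.succ (x.1 ♯ b)) (⨆ x : Set.Iio b, Order.succ (a ♯ x.1)) := by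
  rw [Ordinal.nadd]

lemma nadd_lt_nadd_right {a b : Ordinal.{0}} (h : a < b) (c : Ordinal.{0}) : a ♯ c < b ♯ c := by
  rw [nadd_eq b c]
  exact lt_of_lt_of_le (Order.lt_succ _)
    (le_max_of_le_left (le_ciSup Ordinal.bddAbove_of_small (⟨a, h⟩ : Set.Iio b)))

lemma nadd_lt_nadd_left {b c : Ordinal.{0}} (h : b < c) (a : Ordinal.{0}) : a ♯ b < a ♯ c := by
  rw [nadd_eq a c]
  exact lt_of_lt_of_le (Order.lt_succ _)
    (le_max_of_le_right (le_ciSup Ordinal.bddAbove_of_small (⟨b, h⟩ : Set.Iio c)))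

lemma zero_nadd (b : Ordinal.{0}) : 0 ♯ b = b := by
  induction b using WellFoundedLT.induction with
  | _ b IH =>
  rw [nadd_eq]
  have h0 : (⨆ x : Set.Iio (0:Ordinal.{0}), Order.succ (x.1 ♯ b)) ≤ 0 :=
    ciSup_le' fun x => absurd (show x.1 < 0 from x.2) (not_lt_of_ge zero_le)
  rw [max_eq_right (h0.trans zero_le)]
  apply le_antisymm
  · exact ciSup_le' fun x => by rw [IH x.1 x.2]; exact Order.succ_le_of_lt x.2
  · by_contra hlt
    push_neg at hlt
    have := le_ciSup Ordinal.bddAbove_of_small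
      (⟨_, hlt⟩ : Set.Iio b) (f := fun x : Set.Iio b => Order.succ (0 ♯ x.1))
    simp only [IH _ hlt] at this
    exact (Order.lt_succ _).not_ge this

lemma nadd_zero (a : Ordinal.{0}) : a ♯ 0 = a := by
  induction a using WellFoundedLT.induction with
  | _ a IH =>
  rw [nadd_eq]
  have h0 : (⨆ x : Set.Iio (0:Ordinal.{0}), Order.succ (a ♯ x.1)) ≤ 0 :=
    ciSup_le' fun x => absurd (show x.1 < 0 from x.2) (not_lt_of_ge zero_le)
  rw [max_eq_left (h0.trans zero_le)]
  apply le_antisymm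
  · exact ciSup_le' fun x => by rw [IH x.1 x.2]; exact Order.succ_le_of_lt x.2
  · by_contra hlt
    push_neg at hlt
    have := le_ciSup Ordinal.bddAbove_of_small
      (⟨_, hlt⟩ : Set.Iio a) (f := fun x : Set.Iio a => Order.succ (x.1 ♯ 0))
    simp only [IH _ hlt] at this
    exact (Order.lt_succ _).not_ge this

/-- Subtraction of a constant is continuous on ordinals. -/
lemma ord_sub_continuous (c : Ordinal.{0}) : Continuous (fun z : Ordinal.{0} => z - c) := by
  rw [continuous_iff_continuousAt]
  intro a
  by_cases ha : Order.IsSuccLimit a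
  · rcases le_or_gt a c with hac | hca
    · have h0 : a - c = 0 := Ordinal.sub_eq_zero_iff_le.2 hac
      have hIic : Set.Iic a ∈ 𝓝 a := by
        rw [← SuccOrder.nhdsLE_eq_nhds]; exact self_mem_nhdsWithin
      have hev : ∀ᶠ z in 𝓝 a, (0 : Ordinal.{0}) = z - c := by
        filter_upwards [hIic] with z hz
        exact (Ordinal.sub_eq_zero_iff_le.2 (le_trans hz hac)).symm
      rw [ContinuousAt, h0]
      exact Filter.Tendsto.congr' hev tendsto_const_nhds
    · have hane : a ≠ 0 := ha.pos.ne'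
      have hsub0 : a - c ≠ 0 := by
        rw [Ne, Ordinal.sub_eq_zero_iff_le]; exact not_le.2 hca
      rw [ContinuousAt]
      refine ((SuccOrder.hasBasis_nhds_Ioc_of_exists_lt ⟨0, pos_iff_ne_zero.2 hane⟩).tendsto_iff (SuccOrder.hasBasis_nhds_Ioc_of_exists_lt ⟨0, pos_iff_ne_zero.2 hsub0⟩)).2 ?_
      intro d hd
      refine ⟨c + d, Ordinal.lt_sub.1 hd, ?_⟩
      intro z hz
      refine ⟨Ordinal.lt_sub.2 hz.1, ?_⟩
      rw [Ordinal.sub_le, Ordinal.add_sub_cancel_of_le hca.le]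
      exact hz.2
  · rw [ContinuousAt, Ordinal.nhds_eq_pure.2 ha]
    exact tendsto_pure_nhds _ a

lemma ord_add_continuous (c : Ordinal.{0}) : Continuous (fun z : Ordinal.{0} => c + z) :=
  ((Order.isNormal_iff_strictMono_and_continuous).1 (Ordinal.isNormal_add_right c)).2

/-- clamp an ordinal into `[1, s]`. -/
def clampTo (s : Ordinal.{0}) (h1 : 1 ≤ s) (z : Ordinal.{0}) : ↥(Set.Icc (1:Ordinal.{0}) s) :=
  ⟨max 1 (min z s), le_max_left _ _, max_le h1 (min_le_right _ _)⟩

lemma clampTo_continuous (s : Ordinal.{0}) (h1 : 1 ≤ s) : Continuous (clampTo s h1) :=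
  Continuous.subtype_mk (continuous_const.max (continuous_id.min continuous_const)) _

lemma clampTo_eq (s : Ordinal.{0}) (h1 : 1 ≤ s) (z : Ordinal.{0}) (hz1 : 1 ≤ z) (hzs : z ≤ s) :
    (clampTo s h1 z).1 = z := by
  simp only [clampTo, min_eq_left hzs, max_eq_right hz1]

/-- The compact ordinal interval `[1, ω^δ]` as a set. -/
abbrev KS (δ : Ordinal.{0}) : Set Ordinal.{0} := Set.Icc 1 (Ordinal.omega0 ^ δ)

/-- The gluing lemma: a sequence of continuous "block maps" whose relevant values eventually
enter any neighborhood of `y0` can be glued to a continuous map on `[1, ω^γ]`. -/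
lemma glue {γ : Ordinal.{0}} {Y : Type*} [TopologicalSpace Y] (y0 : Y)
    (sz : ℕ → Ordinal.{0}) (hsz1 : ∀ m, 1 ≤ sz m) (hszγ : ∀ m, sz m < omega0 ^ γ)
    (q : ℕ → Ordinal.{0} → Y) (hq : ∀ m, Continuous (q m))
    (hshrink : ∀ W ∈ 𝓝 y0, ∃ N : ℕ, ∀ m, N ≤ m → ∀ z : Ordinal.{0},
      1 ≤ z → z ≤ sz m → q m z ∈ W) :
    ∃ F : ↥(KS γ) → Y, Continuous F ∧
      (∀ (m : ℕ) (z : Ordinal.{0}), 1 ≤ z → z ≤ sz m → q m z ∈ Set.range F) ∧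
      y0 ∈ Set.range F := by
  classical
  set c : ℕ → Ordinal.{0} := fun m => Nat.rec 0 (fun m ih => ih + sz m) m with hcdef
  have hcS : ∀ m, c (m+1) = c m + sz m := fun m => rfl
  have hc0 : c 0 = 0 := rfl
  have hszpos : ∀ m, (0:Ordinal.{0}) < sz m := fun m => lt_of_lt_of_le zero_lt_one (hsz1 m)
  have hclt : ∀ m, c m < c (m+1) := by
    intro m
    rw [hcS m]
    conv_lhs => rw [← add_zero (c m)]
    exact (add_lt_add_iff_left (c m)).2 (hszpos m)
  have hcw : ∀ m, c m < omega0 ^ γ := by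
    intro m
    induction m with
    | zero => rw [hc0]; exact opow_pos γ omega0_pos
    | succ m ih => rw [hcS]; exact principal_add_omega0_opow γ ih (hszγ m)
  have hbdd : BddAbove (Set.range c) := ⟨omega0 ^ γ, by rintro _ ⟨m, rfl⟩; exact (hcw m).le⟩
  set t : Ordinal.{0} := ⨆ m, c m with htdef
  have htle : t ≤ omega0 ^ γ := ciSup_le' fun m => (hcw m).le
  have hct : ∀ m, c m < t := fun m => lt_of_lt_of_le (hclt m) (le_ciSup hbdd (m+1))
  have hcmono : Monotone c := monotone_nat_of_le_succ fun m => (hclt m).le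
  have one_le_t : 1 ≤ t := by
    have h1 : (1:Ordinal.{0}) ≤ c 1 := by
      change (1:Ordinal.{0}) ≤ 0 + sz 0
      rw [zero_add]; exact hsz1 0
    exact h1.trans (le_ciSup hbdd 1)
  have hex : ∀ z : Ordinal.{0}, z < t → ∃ m, z ≤ c (m+1) := by
    intro z hz
    obtain ⟨m, hm⟩ := (lt_ciSup_iff hbdd).1 hz
    exact ⟨m, hm.le.trans (hcmono (Nat.le_succ m))⟩
  set F : ↥(KS γ) → Y := fun x =>
    if h : x.1 < t then q (Nat.find (hex x.1 h)) (x.1 - c (Nat.find (hex x.1 h))) else y0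
    with hFdef
  have hFpos : ∀ (x : ↥(KS γ)) (h : x.1 < t),
      F x = q (Nat.find (hex x.1 h)) (x.1 - c (Nat.find (hex x.1 h))) := by
    intro x h; rw [hFdef]; exact dif_pos h
  have hFneg : ∀ (x : ↥(KS γ)), ¬ x.1 < t → F x = y0 := by
    intro x h; rw [hFdef]; exact dif_neg h
  -- the find lands strictly above `c m`
  have hgt : ∀ (x : ↥(KS γ)) (hz : x.1 < t), c (Nat.find (hex x.1 hz)) < x.1 := by
    intro x hz
    rcases Nat.eq_zero_or_pos (Nat.find (hex x.1 hz)) with h0 | hpos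
    · rw [h0, hc0]; exact lt_of_lt_of_le zero_lt_one x.2.1
    · obtain ⟨k, hk⟩ := Nat.exists_eq_succ_of_ne_zero hpos.ne'
      have := Nat.find_min (hex x.1 hz) (m := k) (by omega)
      rw [hk]
      exact not_le.1 this
  have hFblock : ∀ (m : ℕ) (x : ↥(KS γ)), c m < x.1 → x.1 ≤ c (m+1) →
      F x = q m (x.1 - c m) := by
    intro m x h1 h2
    have hxt : x.1 < t := lt_of_le_of_lt h2 (hct (m+1))
    have hm : Nat.find (hex x.1 hxt) = m := by
      rw [Nat.find_eq_iff]
      refine ⟨h2, ?_⟩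
      intro j hj hle
      exact absurd h1 (not_lt.2 (hle.trans (hcmono (Nat.succ_le_of_lt hj))))
    rw [hFpos x hxt, hm]
  refine ⟨F, ?_, ?_, ?_⟩
  · rw [continuous_iff_continuousAt]
    intro x
    by_cases hxt : x.1 < t
    · set m := Nat.find (hex x.1 hxt) with hmdef
      have hm1 : x.1 ≤ c (m+1) := Nat.find_spec (hex x.1 hxt)
      have hm2 : c m < x.1 := hgt x hxt
      have hsucc : c (m+1) < c (m+1) + 1 := by
        conv_lhs => rw [← add_zero (c (m+1))]
        exact (add_lt_add_iff_left _).2 zero_lt_one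
      have hU : IsOpen (Subtype.val ⁻¹' (Set.Ioo (c m) (c (m+1) + 1)) : Set ↥(KS γ)) :=
        isOpen_Ioo.preimage continuous_subtype_val
      have hxU : x ∈ (Subtype.val ⁻¹' (Set.Ioo (c m) (c (m+1) + 1)) : Set ↥(KS γ)) :=
        ⟨hm2, lt_of_le_of_lt hm1 hsucc⟩
      have hcont : ContinuousAt (fun y : ↥(KS γ) => q m (y.1 - c m)) x :=
        ((hq m).comp ((ord_sub_continuous (c m)).comp continuous_subtype_val)).continuousAt
      refine hcont.congr ?_
      refine Filter.eventuallyEq_of_mem (hU.mem_nhds hxU) ?_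
      intro y hy
      have hy2 : y.1 ≤ c (m+1) := by
        have := hy.2
        rw [Ordinal.add_one_eq_succ, Order.lt_succ_iff] at this
        exact this
      exact (hFblock m y hy.1 hy2).symm
    · rw [ContinuousAt, hFneg x hxt]
      intro W hW
      obtain ⟨N, hN⟩ := hshrink W hW
      rw [Filter.mem_map]
      have hV : IsOpen (Subtype.val ⁻¹' (Set.Ioi (c N)) : Set ↥(KS γ)) :=
        isOpen_Ioi.preimage continuous_subtype_val
      have hxV : x ∈ (Subtype.val ⁻¹' (Set.Ioi (c N)) : Set ↥(KS γ)) :=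
        lt_of_lt_of_le (hct N) (not_lt.1 hxt)
      filter_upwards [hV.mem_nhds hxV] with y hy
      by_cases hyt : y.1 < t
      · set m := Nat.find (hex y.1 hyt) with hmdef
        have hm1 : y.1 ≤ c (m+1) := Nat.find_spec (hex y.1 hyt)
        have hm2 : c m < y.1 := hgt y hyt
        have hmN : N ≤ m := by
          by_contra h
          push_neg at h
          exact absurd (hm1.trans (hcmono (Nat.succ_le_of_lt h))) (not_le.2 hy)
        have h1z : (1:Ordinal.{0}) ≤ y.1 - c m := by
          rw [Ordinal.one_le_iff_ne_zero, Ne, Ordinal.sub_eq_zero_iff_le]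
          exact not_le.2 hm2
        have h2z : y.1 - c m ≤ sz m := by
          rw [Ordinal.sub_le, ← hcS m]
          exact hm1
        rw [Set.mem_preimage, hFpos y hyt, ← hmdef]
        exact hN m hmN _ h1z h2z
      · rw [Set.mem_preimage, hFneg y hyt]
        exact mem_of_mem_nhds hW
  · intro m z h1 h2
    have hmem : c m + z ∈ KS γ := by
      constructor
      · exact h1.trans le_add_self
      · refine le_of_lt (lt_of_le_of_lt (add_le_add_right h2 (c m)) ?_)
        rw [← hcS]; exact hcw (m+1)
    refine ⟨⟨c m + z, hmem⟩, ?_⟩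
    have hgt' : c m < c m + z := by
      conv_lhs => rw [← add_zero (c m)]
      exact (add_lt_add_iff_left _).2 (lt_of_lt_of_le zero_lt_one h1)
    have hle' : c m + z ≤ c (m+1) := by rw [hcS]; exact add_le_add_right h2 _
    rw [hFblock m ⟨c m + z, hmem⟩ hgt' hle', Ordinal.add_sub_cancel]
  · refine ⟨⟨t, one_le_t, htle⟩, ?_⟩
    exact hFneg _ (lt_irrefl t)


/-- Countable cofinal sequence below a nonzero countable ordinal. -/
lemma csl (α : Ordinal.{0}) (h0 : α ≠ 0) (hc : α.card ≤ Cardinal.aleph0) :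
    ∃ s : ℕ → Ordinal.{0}, (∀ n, s n < α) ∧ ∀ x, x < α → ∃ n, x ≤ s n := by
  have hmk : Cardinal.mk ↥(Set.Iio α) ≤ Cardinal.aleph0 := by
    rw [Ordinal.mk_Iio_ordinal]
    calc Cardinal.lift.{1} α.card ≤ Cardinal.lift.{1} Cardinal.aleph0 := Cardinal.lift_le.2 hc
      _ = Cardinal.aleph0 := Cardinal.lift_aleph0
  have hcnt : (Set.Iio α).Countable := Set.countable_coe_iff.1 (Cardinal.mk_le_aleph0_iff.1 hmk)
  have hne : (Set.Iio α).Nonempty := ⟨0, pos_iff_ne_zero.2 h0⟩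
  obtain ⟨f, hf⟩ := hcnt.exists_surjective hne
  refine ⟨fun n => (f n : Ordinal.{0}), fun n => (f n).2, ?_⟩
  intro x hx
  obtain ⟨n, hn⟩ := hf ⟨x, hx⟩
  refine ⟨n, ?_⟩
  show x ≤ (f n : Ordinal.{0})
  rw [hn]

/-- Data for one factor `[1, ω^α]`: an exponent sequence `e n < α` whose partial
ω-power sums `a n` are cofinal in `ω^α`. -/
lemma sidedata (α : Ordinal.{0}) (h0 : α ≠ 0) (hc : α.card ≤ Cardinal.aleph0) :
    ∃ (e : ℕ → Ordinal.{0}) (a : ℕ → Ordinal.{0}),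
      (∀ n, e n < α) ∧ a 0 = 0 ∧ (∀ n, a (n+1) = a n + omega0 ^ (e n)) ∧
      (∀ n, a n < omega0 ^ α) ∧ (∀ x, x < omega0 ^ α → ∃ n, x ≤ a n) := by
  rcases Ordinal.zero_or_succ_or_isSuccLimit α with rfl | ⟨α', rfl⟩ | hlim
  · exact absurd rfl h0
  · -- successor case
    refine ⟨fun _ => α', fun n => Nat.rec 0 (fun _ ih => ih + omega0 ^ α') n,
      fun _ => Order.lt_succ α', rfl, fun _ => rfl, ?_, ?_⟩
    all_goals
      have key : ∀ n : ℕ, (Nat.rec 0 (fun _ ih => ih + omega0 ^ α') n : Ordinal.{0}) =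
          omega0 ^ α' * n := by
        intro n; induction n with
        | zero => simp
        | succ n ih =>
          show (Nat.rec 0 (fun _ ih => ih + omega0 ^ α') n : Ordinal.{0}) + omega0 ^ α' = _
          rw [ih, Nat.cast_succ, mul_add_one]
    · intro n
      show (Nat.rec 0 (fun _ ih => ih + omega0 ^ α') n : Ordinal.{0}) < _
      rw [key n, opow_succ]
      exact (mul_lt_mul_iff_of_pos_left (opow_pos α' omega0_pos)).2 (nat_lt_omega0 n)
    · intro x hx
      rw [opow_succ] at hx
      obtain ⟨c', hc', hxc⟩ := (lt_mul_iff_of_isSuccLimit isSuccLimit_omega0).1 hx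
      obtain ⟨n, rfl⟩ := lt_omega0.1 hc'
      refine ⟨n, ?_⟩
      show x ≤ (Nat.rec 0 (fun _ ih => ih + omega0 ^ α') n : Ordinal.{0})
      rw [key n]; exact hxc.le
  · -- limit case
    obtain ⟨s, hs, hcof⟩ := csl α h0 hc
    have he : ∀ n, s n + 1 < α := by
      intro n
      have := hlim.succ_lt (hs n)
      rwa [← Ordinal.add_one_eq_succ] at this
    refine ⟨fun n => s n + 1, fun n => Nat.rec 0 (fun n ih => ih + omega0 ^ (s n + 1)) n,
      he, rfl, fun _ => rfl, ?_, ?_⟩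
    · intro n
      show (Nat.rec 0 (fun n ih => ih + omega0 ^ (s n + 1)) n : Ordinal.{0}) < _
      induction n with
      | zero => exact opow_pos α omega0_pos
      | succ n ih =>
        show (Nat.rec 0 (fun n ih => ih + omega0 ^ (s n + 1)) n : Ordinal.{0})
            + omega0 ^ (s n + 1) < _
        exact principal_add_omega0_opow α ih ((opow_lt_opow_iff_right one_lt_omega0).2 (he n))
    · intro x hx
      rcases eq_or_ne x 0 with rfl | hx0
      · exact ⟨0, le_refl _⟩
      · have hlog : log omega0 x < α := by
          have h1 : omega0 ^ log omega0 x ≤ x := opow_log_le_self omega0 hx0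
          exact (opow_lt_opow_iff_right one_lt_omega0).1 (lt_of_le_of_lt h1 hx)
        obtain ⟨n, hn⟩ := hcof _ hlog
        refine ⟨n+1, ?_⟩
        have h2 : x < omega0 ^ (s n + 1) := by
          refine lt_of_lt_of_le (lt_opow_succ_log_self one_lt_omega0 x)
            (opow_le_opow_right omega0_pos ?_)
          rw [Ordinal.add_one_eq_succ]
          exact Order.succ_le_succ hn
        calc x ≤ omega0 ^ (s n + 1) := h2.le
          _ ≤ (Nat.rec 0 (fun n ih => ih + omega0 ^ (s n + 1)) n : Ordinal.{0})
              + omega0 ^ (s n + 1) := le_add_self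
          _ = _ := rfl


lemma one_le_opow (δ : Ordinal.{0}) : (1:Ordinal.{0}) ≤ omega0 ^ δ :=
  Order.one_le_iff_pos.2 (opow_pos δ omega0_pos)

/-- Main recursion: continuous surjection `[1, ω^(α♯β)] ↠ [1,ω^α] × [1,ω^β]`. -/
lemma good (γ : Ordinal.{0}) : ∀ α β : Ordinal.{0}, α ♯ β = γ →
    α.card ≤ Cardinal.aleph0 → β.card ≤ Cardinal.aleph0 →
    ∃ F : ↥(KS γ) → ↥(KS α) × ↥(KS β), Continuous F ∧ Function.Surjective F := by
  induction γ using Ordinal.induction with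
  | h γ IH =>
  intro α β hab hcα hcβ
  rcases eq_or_ne α 0 with rfl | hα0
  · have hβγ : β = γ := by rw [← hab, zero_nadd]
    subst hβγ
    refine ⟨fun x => (⟨1, le_refl 1, by rw [opow_zero]⟩, x), continuous_const.prodMk continuous_id, ?_⟩
    rintro ⟨u, v⟩
    refine ⟨v, ?_⟩
    have hu1 : u.1 = 1 := le_antisymm (by simpa [opow_zero] using u.2.2) u.2.1
    exact Prod.ext (Subtype.ext hu1.symm) rfl
  rcases eq_or_ne β 0 with rfl | hβ0
  · have hαγ : α = γ := by rw [← hab, nadd_zero]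
    subst hαγ
    refine ⟨fun x => (x, ⟨1, le_refl 1, by rw [opow_zero]⟩), continuous_id.prodMk continuous_const, ?_⟩
    rintro ⟨u, v⟩
    refine ⟨u, ?_⟩
    have hv1 : v.1 = 1 := le_antisymm (by simpa [opow_zero] using v.2.2) v.2.1
    exact Prod.ext rfl (Subtype.ext hv1.symm)
  -- main case : α, β ≠ 0
  obtain ⟨e, a, he, ha0, haS, haB, hacof⟩ := sidedata α hα0 hcα
  obtain ⟨f, b, hf, hb0, hbS, hbB, hbcof⟩ := sidedata β hβ0 hcβ
  have hamono : Monotone a := monotone_nat_of_le_succ fun n => by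
    rw [haS n]; exact le_self_add
  have hbmono : Monotone b := monotone_nat_of_le_succ fun n => by
    rw [hbS n]; exact le_self_add
  -- the inductive surjections for the two kinds of pieces
  have HE : ∀ n : ℕ, ∃ G : ↥(KS ((e n) ♯ β)) → ↥(KS (e n)) × ↥(KS β),
      Continuous G ∧ Function.Surjective G := by
    intro n
    refine IH ((e n) ♯ β) ?_ (e n) β rfl ((Ordinal.card_le_card (he n).le).trans hcα) hcβ
    rw [← hab]; exact nadd_lt_nadd_right (he n) β
  have HO : ∀ n : ℕ, ∃ G : ↥(KS (α ♯ (f n))) → ↥(KS α) × ↥(KS (f n)),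
      Continuous G ∧ Function.Surjective G := by
    intro n
    refine IH (α ♯ (f n)) ?_ α (f n) rfl hcα ((Ordinal.card_le_card (hf n).le).trans hcβ)
    rw [← hab]; exact nadd_lt_nadd_left (hf n) α
  choose GE hGEc hGEs using HE
  choose GO hGOc hGOs using HO
  -- membership helpers
  have hmemA : ∀ (n : ℕ) (u : ↥(KS (e n))), a n + u.1 ∈ KS α := by
    intro n u
    refine ⟨u.2.1.trans (le_add_self), ?_⟩
    calc a n + u.1 ≤ a n + omega0 ^ (e n) := add_le_add_right u.2.2 _
      _ = a (n+1) := (haS n).symm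
      _ ≤ omega0 ^ α := (haB (n+1)).le
  have hmemAfull : ∀ (n : ℕ) (u : ↥(KS α)), a n + u.1 ∈ KS α := by
    intro n u
    refine ⟨u.2.1.trans (le_add_self), ?_⟩
    calc a n + u.1 ≤ a n + omega0 ^ α := add_le_add_right u.2.2 _
      _ = omega0 ^ α := add_omega0_opow (haB n)
  have hmemB : ∀ (n : ℕ) (v : ↥(KS (f n))), b n + v.1 ∈ KS β := by
    intro n v
    refine ⟨v.2.1.trans (le_add_self), ?_⟩
    calc b n + v.1 ≤ b n + omega0 ^ (f n) := add_le_add_right v.2.2 _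
      _ = b (n+1) := (hbS n).symm
      _ ≤ omega0 ^ β := (hbB (n+1)).le
  have hmemBfull : ∀ (n : ℕ) (v : ↥(KS β)), b n + v.1 ∈ KS β := by
    intro n v
    refine ⟨v.2.1.trans (le_add_self), ?_⟩
    calc b n + v.1 ≤ b n + omega0 ^ β := add_le_add_right v.2.2 _
      _ = omega0 ^ β := add_omega0_opow (hbB n)
  -- the pieces
  set qE : ∀ _ : ℕ, Ordinal.{0} → ↥(KS α) × ↥(KS β) := fun n z =>
    (⟨a n + (GE n (clampTo _ (one_le_opow _) z)).1.1, hmemA n _⟩,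
     ⟨b n + (GE n (clampTo _ (one_le_opow _) z)).2.1, hmemBfull n _⟩) with hqEdef
  set qO : ∀ _ : ℕ, Ordinal.{0} → ↥(KS α) × ↥(KS β) := fun n z =>
    (⟨a n + (GO n (clampTo _ (one_le_opow _) z)).1.1, hmemAfull n _⟩,
     ⟨b n + (GO n (clampTo _ (one_le_opow _) z)).2.1, hmemB n _⟩) with hqOdef
  have hqEc : ∀ n, Continuous (qE n) := by
    intro n
    apply Continuous.prodMk
    · exact ((ord_add_continuous (a n)).comp (continuous_subtype_val.comp
        (continuous_fst.comp ((hGEc n).comp (clampTo_continuous _ _))))).subtype_mk _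
    · exact ((ord_add_continuous (b n)).comp (continuous_subtype_val.comp
        (continuous_snd.comp ((hGEc n).comp (clampTo_continuous _ _))))).subtype_mk _
  have hqOc : ∀ n, Continuous (qO n) := by
    intro n
    apply Continuous.prodMk
    · exact ((ord_add_continuous (a n)).comp (continuous_subtype_val.comp
        (continuous_fst.comp ((hGOc n).comp (clampTo_continuous _ _))))).subtype_mk _
    · exact ((ord_add_continuous (b n)).comp (continuous_subtype_val.comp
        (continuous_snd.comp ((hGOc n).comp (clampTo_continuous _ _))))).subtype_mk _
  set sz : ℕ → Ordinal.{0} := fun m =>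
    if m % 2 = 0 then omega0 ^ ((e (m/2)) ♯ β) else omega0 ^ (α ♯ (f (m/2))) with hszdef
  set q : ℕ → Ordinal.{0} → ↥(KS α) × ↥(KS β) := fun m =>
    if m % 2 = 0 then qE (m/2) else qO (m/2) with hqdef
  have hszsel : ∀ m, m % 2 = 0 → sz m = omega0 ^ ((e (m/2)) ♯ β) := by
    intro m h; simp only [hszdef]; rw [if_pos h]
  have hszsel' : ∀ m, ¬ m % 2 = 0 → sz m = omega0 ^ (α ♯ (f (m/2))) := by
    intro m h; simp only [hszdef]; rw [if_neg h]
  have hqsel : ∀ m, m % 2 = 0 → q m = qE (m/2) := by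
    intro m h; simp only [hqdef]; rw [if_pos h]
  have hqsel' : ∀ m, ¬ m % 2 = 0 → q m = qO (m/2) := by
    intro m h; simp only [hqdef]; rw [if_neg h]
  have hsz1 : ∀ m, (1:Ordinal.{0}) ≤ sz m := by
    intro m
    by_cases h : m % 2 = 0
    · rw [hszsel m h]; exact one_le_opow _
    · rw [hszsel' m h]; exact one_le_opow _
  have hszγ : ∀ m, sz m < omega0 ^ γ := by
    intro m
    by_cases h : m % 2 = 0
    · rw [hszsel m h]
      refine (opow_lt_opow_iff_right one_lt_omega0).2 ?_
      rw [← hab]; exact nadd_lt_nadd_right (he _) β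
    · rw [hszsel' m h]
      refine (opow_lt_opow_iff_right one_lt_omega0).2 ?_
      rw [← hab]; exact nadd_lt_nadd_left (hf _) α
  have hqc : ∀ m, Continuous (q m) := by
    intro m
    by_cases h : m % 2 = 0
    · rw [hqsel m h]; exact hqEc _
    · rw [hqsel' m h]; exact hqOc _
  -- uniform lower bounds on the coordinates of the piece values
  have hval : ∀ (m : ℕ) (z : Ordinal.{0}),
      (a (m/2) < (q m z).1.1 ∧ b (m/2) < (q m z).2.1) := by
    intro m z
    have key : ∀ (c s : Ordinal.{0}), 1 ≤ s → c < c + s := by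
      intro c s hs
      conv_lhs => rw [← add_zero c]
      exact (add_lt_add_iff_left c).2 (lt_of_lt_of_le zero_lt_one hs)
    by_cases h : m % 2 = 0
    · rw [hqsel m h]
      exact ⟨key _ _ (GE (m/2) _).1.2.1, key _ _ (GE (m/2) _).2.2.1⟩
    · rw [hqsel' m h]
      exact ⟨key _ _ (GO (m/2) _).1.2.1, key _ _ (GO (m/2) _).2.2.1⟩
  -- the glued map
  set topA : ↥(KS α) := ⟨omega0 ^ α, one_le_opow α, le_refl _⟩ with htopA
  set topB : ↥(KS β) := ⟨omega0 ^ β, one_le_opow β, le_refl _⟩ with htopB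
  have hshrink : ∀ W ∈ 𝓝 ((topA, topB) : ↥(KS α) × ↥(KS β)), ∃ N : ℕ, ∀ m, N ≤ m →
      ∀ z : Ordinal.{0}, 1 ≤ z → z ≤ sz m → q m z ∈ W := by
    intro W hW
    obtain ⟨U, hU, V, hV, hUVW⟩ := mem_nhds_prod_iff.1 hW
    rw [nhds_subtype, Filter.mem_comap] at hU hV
    obtain ⟨SU, hSU, hSUsub⟩ := hU
    obtain ⟨SV, hSV, hSVsub⟩ := hV
    have hαne : omega0 ^ α ≠ 0 := (opow_pos α omega0_pos).ne'
    have hβne : omega0 ^ β ≠ 0 := (opow_pos β omega0_pos).ne'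
    obtain ⟨uA, huA, hIocA⟩ := (SuccOrder.hasBasis_nhds_Ioc_of_exists_lt ⟨0, pos_iff_ne_zero.2 hαne⟩).mem_iff.1 hSU
    obtain ⟨uB, huB, hIocB⟩ := (SuccOrder.hasBasis_nhds_Ioc_of_exists_lt ⟨0, pos_iff_ne_zero.2 hβne⟩).mem_iff.1 hSV
    obtain ⟨Na, hNa⟩ := hacof uA huA
    obtain ⟨Nb, hNb⟩ := hbcof uB huB
    refine ⟨2 * (max Na Nb) + 2, ?_⟩
    intro m hm z _ _
    have hn : max Na Nb < m / 2 := by omega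
    have h1 : uA < (q m z).1.1 :=
      lt_of_le_of_lt (hNa.trans (hamono (le_of_lt (lt_of_le_of_lt (le_max_left _ _) hn))))
        (hval m z).1
    have h2 : uB < (q m z).2.1 :=
      lt_of_le_of_lt (hNb.trans (hbmono (le_of_lt (lt_of_le_of_lt (le_max_right _ _) hn))))
        (hval m z).2
    refine hUVW ⟨?_, ?_⟩
    · exact hSUsub (hIocA ⟨h1, (q m z).1.2.2⟩)
    · exact hSVsub (hIocB ⟨h2, (q m z).2.2.2⟩)
  obtain ⟨F, hFc, hFcov, hFtop⟩ := glue ((topA, topB) : ↥(KS α) × ↥(KS β)) sz hsz1 hszγ q hqc hshrink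
  refine ⟨F, hFc, ?_⟩
  -- surjectivity
  rintro ⟨x, y⟩
  by_cases hxy : x.1 = omega0 ^ α ∧ y.1 = omega0 ^ β
  · have : ((x, y) : ↥(KS α) × ↥(KS β)) = (topA, topB) := by
      rw [htopA, htopB]
      exact Prod.ext (Subtype.ext hxy.1) (Subtype.ext hxy.2)
    rw [this]; exact hFtop
  · have hexQ : ∃ n : ℕ, x.1 ≤ a n ∨ y.1 ≤ b n := by
      rcases not_and_or.1 hxy with hx | hy
      · obtain ⟨n, hn⟩ := hacof x.1 (lt_of_le_of_ne x.2.2 hx)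
        exact ⟨n, Or.inl hn⟩
      · obtain ⟨n, hn⟩ := hbcof y.1 (lt_of_le_of_ne y.2.2 hy)
        exact ⟨n, Or.inr hn⟩
    classical
    have hk0 : Nat.find hexQ ≠ 0 := by
      intro h
      have hsp := Nat.find_spec hexQ
      rw [h] at hsp
      rcases hsp with h' | h'
      · rw [ha0] at h'; exact absurd (lt_of_lt_of_le zero_lt_one (x.2.1.trans h')) (lt_irrefl _)
      · rw [hb0] at h'; exact absurd (lt_of_lt_of_le zero_lt_one (y.2.1.trans h')) (lt_irrefl _)
    obtain ⟨j, hj⟩ := Nat.exists_eq_succ_of_ne_zero hk0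
    have hnotj : ¬ (x.1 ≤ a j ∨ y.1 ≤ b j) := Nat.find_min hexQ (by omega)
    push_neg at hnotj
    obtain ⟨hxj, hyj⟩ := hnotj
    have hkj : x.1 ≤ a (j+1) ∨ y.1 ≤ b (j+1) := by
      have hsp := Nat.find_spec hexQ
      rwa [hj] at hsp
    rcases hkj with hcase | hcase
    · -- even piece 2*j
      have hu1 : (1:Ordinal.{0}) ≤ x.1 - a j := by
        rw [Ordinal.one_le_iff_ne_zero, Ne, Ordinal.sub_eq_zero_iff_le]; exact not_le.2 hxj
      have hu2 : x.1 - a j ≤ omega0 ^ (e j) := by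
        rw [Ordinal.sub_le, ← haS j]; exact hcase
      have hv1 : (1:Ordinal.{0}) ≤ y.1 - b j := by
        rw [Ordinal.one_le_iff_ne_zero, Ne, Ordinal.sub_eq_zero_iff_le]; exact not_le.2 hyj
      have hv2 : y.1 - b j ≤ omega0 ^ β := by
        rw [Ordinal.sub_le, add_omega0_opow (hbB j)]; exact y.2.2
      obtain ⟨w, hw⟩ := hGEs j (⟨x.1 - a j, hu1, hu2⟩, ⟨y.1 - b j, hv1, hv2⟩)
      have hm0 : (2*j) % 2 = 0 := by omega
      have hm2 : (2*j) / 2 = j := by omega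
      have hq2j : q (2*j) w.1 = (x, y) := by
        rw [hqsel _ hm0, hm2]
        have hcl : clampTo (omega0 ^ ((e j) ♯ β)) (one_le_opow _) w.1 = w :=
          Subtype.ext (clampTo_eq _ _ _ w.2.1 w.2.2)
        refine Prod.ext (Subtype.ext ?_) (Subtype.ext ?_)
        · show a j + (GE j (clampTo _ _ w.1)).1.1 = x.1
          rw [hcl, hw]
          exact Ordinal.add_sub_cancel_of_le hxj.le
        · show b j + (GE j (clampTo _ _ w.1)).2.1 = y.1
          rw [hcl, hw]
          exact Ordinal.add_sub_cancel_of_le hyj.le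
      have hwsz : w.1 ≤ sz (2*j) := by
        rw [hszsel _ hm0, hm2]
        exact w.2.2
      have := hFcov (2*j) w.1 w.2.1 hwsz
      rwa [hq2j] at this
    · -- odd piece 2*j+1
      have hu1 : (1:Ordinal.{0}) ≤ x.1 - a j := by
        rw [Ordinal.one_le_iff_ne_zero, Ne, Ordinal.sub_eq_zero_iff_le]; exact not_le.2 hxj
      have hu2 : x.1 - a j ≤ omega0 ^ α := by
        rw [Ordinal.sub_le, add_omega0_opow (haB j)]; exact x.2.2
      have hv1 : (1:Ordinal.{0}) ≤ y.1 - b j := by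
        rw [Ordinal.one_le_iff_ne_zero, Ne, Ordinal.sub_eq_zero_iff_le]; exact not_le.2 hyj
      have hv2 : y.1 - b j ≤ omega0 ^ (f j) := by
        rw [Ordinal.sub_le, ← hbS j]; exact hcase
      obtain ⟨w, hw⟩ := hGOs j (⟨x.1 - a j, hu1, hu2⟩, ⟨y.1 - b j, hv1, hv2⟩)
      have hm0 : ¬ ((2*j+1) % 2 = 0) := by omega
      have hm2 : (2*j+1) / 2 = j := by omega
      have hq2j : q (2*j+1) w.1 = (x, y) := by
        rw [hqsel' _ hm0, hm2]
        have hcl : clampTo (omega0 ^ (α ♯ (f j))) (one_le_opow _) w.1 = w :=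
          Subtype.ext (clampTo_eq _ _ _ w.2.1 w.2.2)
        refine Prod.ext (Subtype.ext ?_) (Subtype.ext ?_)
        · show a j + (GO j (clampTo _ _ w.1)).1.1 = x.1
          rw [hcl, hw]
          exact Ordinal.add_sub_cancel_of_le hxj.le
        · show b j + (GO j (clampTo _ _ w.1)).2.1 = y.1
          rw [hcl, hw]
          exact Ordinal.add_sub_cancel_of_le hyj.le
      have hwsz : w.1 ≤ sz (2*j+1) := by
        rw [hszsel' _ hm0, hm2]
        exact w.2.2
      have := hFcov (2*j+1) w.1 w.2.1 hwsz
      rwa [hq2j] at this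


/-- `min |p-q| |p+q| ≤ ||p|-|q||` over the reals. -/
lemma min_abs_le (p q : ℝ) : min |p - q| |p + q| ≤ |(|p| - |q|)| := by
  rcases le_total 0 p with hp | hp <;> rcases le_total 0 q with hq | hq
  · rw [abs_of_nonneg hp, abs_of_nonneg hq]
    exact min_le_left _ _
  · rw [abs_of_nonneg hp, abs_of_nonpos hq, sub_neg_eq_add]
    exact min_le_right _ _
  · rw [abs_of_nonpos hp, abs_of_nonneg hq]
    have h : -p - q = -(p + q) := by ring
    rw [h, abs_neg]
    exact min_le_right _ _
  · rw [abs_of_nonpos hp, abs_of_nonpos hq]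
    have h : -p - -q = -(p - q) := by ring
    rw [h, abs_neg]
    exact min_le_left _ _

lemma exists_max {X : Type*} [TopologicalSpace X] [CompactSpace X] [Nonempty X] (f : C(X, ℝ)) :
    ∃ x, ‖f‖ = |f x| ∧ ∀ y, |f y| ≤ |f x| := by
  obtain ⟨x, -, hx⟩ := isCompact_univ.exists_isMaxOn univ_nonempty
    (f.continuous.abs.continuousOn)
  replace hx : ∀ y, |f y| ≤ |f x| := fun y => hx (mem_univ y)
  refine ⟨x, ?_, fun y => hx y⟩
  refine le_antisymm ?_ ?_
  · refine (ContinuousMap.norm_le _ (abs_nonneg _)).2 ?_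
    intro y; rw [Real.norm_eq_abs]; exact hx y
  · rw [← Real.norm_eq_abs]; exact f.norm_coe_le_norm x


end OrdSPR

end AuxiliaryConstructions

open OrdSPR in
/-- For every countable ordinal `α < ω₁` (real scalars) there is a linear
isometric embedding `T : C([1, ω^α]) → C([1, ω^(α ⊕ α)])` such that any two normalized
functions in the range overlap at some point with both moduli at least `1/3`; consequently the
range does `3`-SPR. -/
theorem real_overlap_embedding_into_double {α : Ordinal.{0}}
    (hα : α.card ≤ Cardinal.aleph0) :
    ∃ T : C(Set.Icc (1 : Ordinal.{0}) (Ordinal.omega0 ^ α), ℝ) →ₗᵢ[ℝ]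
        C(Set.Icc (1 : Ordinal.{0}) (Ordinal.omega0 ^ (α ♯ α)), ℝ),
      (∀ f g : C(Set.Icc (1 : Ordinal.{0}) (Ordinal.omega0 ^ α), ℝ),
        ‖f‖ = 1 → ‖g‖ = 1 →
        ∃ r : Set.Icc (1 : Ordinal.{0}) (Ordinal.omega0 ^ (α ♯ α)),
          1 / 3 ≤ min |T f r| |T g r|) ∧
      DoesCSPR (LinearMap.range T.toLinearMap) 3 := by
  haveI : Nonempty ↥(KS α) := ⟨⟨1, le_refl 1, one_le_opow α⟩⟩
  obtain ⟨F, hFc, hFs⟩ := good (α ♯ α) α α rfl hα hα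
  -- the underlying map
  set Tfun : C(↥(KS α), ℝ) → C(↥(KS (α ♯ α)), ℝ) := fun f =>
    ⟨fun r => (f (F r).1 + f (F r).2) / 2,
      ((f.continuous.comp (continuous_fst.comp hFc)).add
        (f.continuous.comp (continuous_snd.comp hFc))).div_const 2⟩ with hTdef
  have hTapp : ∀ (f : C(↥(KS α), ℝ)) (r : ↥(KS (α ♯ α))),
      Tfun f r = (f (F r).1 + f (F r).2) / 2 := fun f r => rfl
  have hTnorm : ∀ f, ‖Tfun f‖ = ‖f‖ := by
    intro f
    obtain ⟨x0, hx0n, hx0m⟩ := exists_max f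
    refine le_antisymm ?_ ?_
    · refine (ContinuousMap.norm_le _ (norm_nonneg f)).2 ?_
      intro r
      rw [hTapp, Real.norm_eq_abs]
      have h1 : |f (F r).1| ≤ ‖f‖ := by
        rw [← Real.norm_eq_abs]; exact f.norm_coe_le_norm _
      have h2 : |f (F r).2| ≤ ‖f‖ := by
        rw [← Real.norm_eq_abs]; exact f.norm_coe_le_norm _
      have h3 : |f (F r).1 + f (F r).2| ≤ ‖f‖ + ‖f‖ :=
        (abs_add_le _ _).trans (add_le_add h1 h2)
      have h4 : |(f (F r).1 + f (F r).2)/2| = |f (F r).1 + f (F r).2|/2 := by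
        rw [abs_div]; norm_num
      rw [h4]; linarith
    · obtain ⟨r, hr⟩ := hFs (x0, x0)
      have hval : Tfun f r = f x0 := by
        rw [hTapp, hr]
        show (f x0 + f x0)/2 = f x0
        ring
      have := (Tfun f).norm_coe_le_norm r
      rw [hval, Real.norm_eq_abs] at this
      rw [hx0n]
      exact this
  -- linear isometry
  set T : C(↥(KS α), ℝ) →ₗᵢ[ℝ] C(↥(KS (α ♯ α)), ℝ) :=
    { toFun := Tfun
      map_add' := by
        intro f g; ext r
        simp only [hTapp, ContinuousMap.add_apply]
        show ((f + g) (F r).1 + (f + g) (F r).2)/2 = _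
        simp only [ContinuousMap.add_apply]
        ring
      map_smul' := by
        intro c f; ext r
        simp only [ContinuousMap.smul_apply, RingHom.id_apply, _root_.smul_eq_mul]
        show ((c • f) (F r).1 + (c • f) (F r).2)/2 = c * ((f (F r).1 + f (F r).2)/2)
        simp only [ContinuousMap.smul_apply, _root_.smul_eq_mul]
        ring
      norm_map' := hTnorm } with hTdef2
  have hTcoe : ∀ f, T f = Tfun f := fun f => rfl
  -- overlap property
  have hoverlap : ∀ f g : C(↥(KS α), ℝ), ‖f‖ = 1 → ‖g‖ = 1 →
      ∃ r : ↥(KS (α ♯ α)), 1/3 ≤ min |Tfun f r| |Tfun g r| := by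
    intro f g hfn hgn
    by_cases hcase : ∃ t : ↥(KS α), 1/3 ≤ min |f t| |g t|
    · obtain ⟨t, ht⟩ := hcase
      obtain ⟨r, hr⟩ := hFs (t, t)
      refine ⟨r, ?_⟩
      have h1 : Tfun f r = f t := by
        rw [hTapp, hr]; show (f t + f t)/2 = f t; ring
      have h2 : Tfun g r = g t := by
        rw [hTapp, hr]; show (g t + g t)/2 = g t; ring
      rw [h1, h2]; exact ht
    · push_neg at hcase
      obtain ⟨x0, hx0n, hx0m⟩ := exists_max f
      obtain ⟨y0, hy0n, hy0m⟩ := exists_max g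
      have hfx0 : |f x0| = 1 := by rw [← hx0n, hfn]
      have hgy0 : |g y0| = 1 := by rw [← hy0n, hgn]
      have hgx0 : |g x0| < 1/3 := by
        have := hcase x0
        rcases min_lt_iff.1 this with h | h
        · rw [hfx0] at h; norm_num at h
        · exact h
      have hfy0 : |f y0| < 1/3 := by
        have := hcase y0
        rcases min_lt_iff.1 this with h | h
        · exact h
        · rw [hgy0] at h; norm_num at h
      obtain ⟨r, hr⟩ := hFs (x0, y0)
      have h1 : Tfun f r = (f x0 + f y0)/2 := by rw [hTapp, hr]
      have h2 : Tfun g r = (g x0 + g y0)/2 := by rw [hTapp, hr]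
      refine ⟨r, le_min ?_ ?_⟩
      · rw [h1]
        have habs : |f x0| - |f y0| ≤ |f x0 + f y0| := by
          have := abs_sub_abs_le_abs_sub (f x0) (-(f y0))
          rw [abs_neg, sub_neg_eq_add] at this
          exact this
        have h4 : |(f x0 + f y0)/2| = |f x0 + f y0|/2 := by rw [abs_div]; norm_num
        rw [h4]; rw [hfx0] at habs; linarith
      · rw [h2]
        have habs : |g y0| - |g x0| ≤ |g x0 + g y0| := by
          have := abs_sub_abs_le_abs_sub (g y0) (-(g x0))
          rw [abs_neg, sub_neg_eq_add, add_comm] at this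
          exact this
        have h4 : |(g x0 + g y0)/2| = |g x0 + g y0|/2 := by rw [abs_div]; norm_num
        rw [h4]; rw [hgy0] at habs; linarith
  refine ⟨T, ?_, ?_⟩
  · intro f g hf hg
    obtain ⟨r, hrr⟩ := hoverlap f g hf hg
    exact ⟨r, hrr⟩
  · -- DoesCSPR
    intro u hu v hv
    obtain ⟨fu, rfl⟩ := LinearMap.mem_range.1 hu
    obtain ⟨gv, rfl⟩ := LinearMap.mem_range.1 hv
    have hRHS : (0:ℝ) ≤ 3 * ‖cmAbs (T.toLinearMap fu) - cmAbs (T.toLinearMap gv)‖ := by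
      positivity
    have hbdd : BddBelow (Set.range fun l : {c : ℝ // ‖c‖ = 1} =>
        ‖T.toLinearMap fu - (l : ℝ) • T.toLinearMap gv‖) := by
      refine ⟨0, ?_⟩
      rintro _ ⟨l, rfl⟩
      exact norm_nonneg _
    have hle : ∀ (l : ℝ) (hl : ‖l‖ = 1),
        sprInf (T.toLinearMap fu) (T.toLinearMap gv) ≤ ‖T.toLinearMap fu - l • T.toLinearMap gv‖ :=
      fun l hl => ciInf_le hbdd (⟨l, hl⟩ : {c : ℝ // ‖c‖ = 1})
    have hle1 : sprInf (T.toLinearMap fu) (T.toLinearMap gv) ≤ ‖T.toLinearMap fu - T.toLinearMap gv‖ := by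
      have := hle 1 (by simp)
      rwa [one_smul] at this
    have hle2 : sprInf (T.toLinearMap fu) (T.toLinearMap gv) ≤ ‖T.toLinearMap fu + T.toLinearMap gv‖ := by
      have := hle (-1) (by simp)
      rwa [neg_smul, one_smul, sub_neg_eq_add] at this
    by_cases hs : fu - gv = 0
    · have h0 : T.toLinearMap fu - T.toLinearMap gv = 0 := by
        rw [← map_sub, hs, map_zero]
      calc sprInf (T.toLinearMap fu) (T.toLinearMap gv) ≤ ‖T.toLinearMap fu - T.toLinearMap gv‖ := hle1
        _ = 0 := by rw [h0, norm_zero]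
        _ ≤ _ := hRHS
    by_cases ht : fu + gv = 0
    · have h0 : T.toLinearMap fu + T.toLinearMap gv = 0 := by
        rw [← map_add, ht, map_zero]
      calc sprInf (T.toLinearMap fu) (T.toLinearMap gv) ≤ ‖T.toLinearMap fu + T.toLinearMap gv‖ := hle2
        _ = 0 := by rw [h0, norm_zero]
        _ ≤ _ := hRHS
    -- main case
    have hsn : ‖fu - gv‖ ≠ 0 := norm_ne_zero_iff.2 hs
    have htn : ‖fu + gv‖ ≠ 0 := norm_ne_zero_iff.2 ht
    have hspos : (0:ℝ) < ‖fu - gv‖ := (norm_nonneg _).lt_of_ne' hsn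
    have htpos : (0:ℝ) < ‖fu + gv‖ := (norm_nonneg _).lt_of_ne' htn
    have hnorm1 : ‖(‖fu - gv‖⁻¹ • (fu - gv) : C(↥(KS α), ℝ))‖ = 1 := by
      rw [norm_smul (‖fu - gv‖⁻¹) (fu - gv), norm_inv, norm_norm, inv_mul_cancel₀ hsn]
    have hnorm2 : ‖(‖fu + gv‖⁻¹ • (fu + gv) : C(↥(KS α), ℝ))‖ = 1 := by
      rw [norm_smul (‖fu + gv‖⁻¹) (fu + gv), norm_inv, norm_norm, inv_mul_cancel₀ htn]
    obtain ⟨r, hrmin⟩ := hoverlap _ _ hnorm1 hnorm2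
    -- unfold the scaled values
    have hev1 : |Tfun (‖fu - gv‖⁻¹ • (fu - gv)) r| = ‖fu - gv‖⁻¹ * |Tfun (fu - gv) r| := by
      have : Tfun (‖fu - gv‖⁻¹ • (fu - gv)) r = ‖fu - gv‖⁻¹ * Tfun (fu - gv) r := by
        rw [hTapp, hTapp]
        simp only [ContinuousMap.smul_apply, _root_.smul_eq_mul]
        ring
      rw [this, abs_mul, abs_inv, abs_norm]
    have hev2 : |Tfun (‖fu + gv‖⁻¹ • (fu + gv)) r| = ‖fu + gv‖⁻¹ * |Tfun (fu + gv) r| := by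
      have : Tfun (‖fu + gv‖⁻¹ • (fu + gv)) r = ‖fu + gv‖⁻¹ * Tfun (fu + gv) r := by
        rw [hTapp, hTapp]
        simp only [ContinuousMap.smul_apply, _root_.smul_eq_mul]
        ring
      rw [this, abs_mul, abs_inv, abs_norm]
    have hmin1 : (1:ℝ)/3 ≤ ‖fu - gv‖⁻¹ * |Tfun (fu - gv) r| := by
      have := (le_min_iff.1 hrmin).1
      rwa [hev1] at this
    have hmin2 : (1:ℝ)/3 ≤ ‖fu + gv‖⁻¹ * |Tfun (fu + gv) r| := by
      have := (le_min_iff.1 hrmin).2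
      rwa [hev2] at this
    have hb1 : ‖fu - gv‖ ≤ 3 * |Tfun (fu - gv) r| := by
      have h := mul_le_mul_of_nonneg_left hmin1 hspos.le
      rw [← mul_assoc, mul_inv_cancel₀ hsn, one_mul] at h
      linarith
    have hb2 : ‖fu + gv‖ ≤ 3 * |Tfun (fu + gv) r| := by
      have h := mul_le_mul_of_nonneg_left hmin2 htpos.le
      rw [← mul_assoc, mul_inv_cancel₀ htn, one_mul] at h
      linarith
    have hsubeval : Tfun (fu - gv) r = Tfun fu r - Tfun gv r := by
      rw [hTapp, hTapp, hTapp]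
      simp only [ContinuousMap.sub_apply]
      ring
    have haddeval : Tfun (fu + gv) r = Tfun fu r + Tfun gv r := by
      rw [hTapp, hTapp, hTapp]
      simp only [ContinuousMap.add_apply]
      ring
    have hpt : |(|Tfun fu r| - |Tfun gv r|)| ≤
        ‖cmAbs (T.toLinearMap fu) - cmAbs (T.toLinearMap gv)‖ := by
      have h := (cmAbs (T.toLinearMap fu) - cmAbs (T.toLinearMap gv)).norm_coe_le_norm r
      rw [Real.norm_eq_abs] at h
      have happ : (cmAbs (T.toLinearMap fu) - cmAbs (T.toLinearMap gv)) r
          = |Tfun fu r| - |Tfun gv r| := by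
        simp only [ContinuousMap.sub_apply]
        show ‖(T.toLinearMap fu) r‖ - ‖(T.toLinearMap gv) r‖ = _
        rw [Real.norm_eq_abs, Real.norm_eq_abs]
        rfl
      rwa [happ] at h
    have hmm : min |Tfun (fu - gv) r| |Tfun (fu + gv) r|
        ≤ |(|Tfun fu r| - |Tfun gv r|)| := by
      rw [hsubeval, haddeval]
      exact min_abs_le _ _
    have hnorm_sub : ‖T.toLinearMap fu - T.toLinearMap gv‖ = ‖fu - gv‖ := by
      rw [← map_sub]
      exact T.norm_map _
    have hnorm_add : ‖T.toLinearMap fu + T.toLinearMap gv‖ = ‖fu + gv‖ := by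
      rw [← map_add]
      exact T.norm_map _
    have h3min : min (3 * |Tfun (fu - gv) r|) (3 * |Tfun (fu + gv) r|)
        = 3 * min |Tfun (fu - gv) r| |Tfun (fu + gv) r| := by
      rcases le_total (|Tfun (fu - gv) r|) (|Tfun (fu + gv) r|) with h | h
      · rw [min_eq_left (by linarith), min_eq_left h]
      · rw [min_eq_right (by linarith), min_eq_right h]
    calc sprInf (T.toLinearMap fu) (T.toLinearMap gv)
        ≤ min ‖T.toLinearMap fu - T.toLinearMap gv‖ ‖T.toLinearMap fu + T.toLinearMap gv‖ :=
          le_min hle1 hle2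
      _ = min ‖fu - gv‖ ‖fu + gv‖ := by rw [hnorm_sub, hnorm_add]
      _ ≤ min (3 * |Tfun (fu - gv) r|) (3 * |Tfun (fu + gv) r|) := min_le_min hb1 hb2
      _ = 3 * min |Tfun (fu - gv) r| |Tfun (fu + gv) r| := h3min
      _ ≤ 3 * |(|Tfun fu r| - |Tfun gv r|)| := by linarith [hmm]
      _ ≤ 3 * ‖cmAbs (T.toLinearMap fu) - cmAbs (T.toLinearMap gv)‖ := by linarith [hpt]

end
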